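/- (Spectral triangle counting lemma) Let G be a simple graph with m edges, spectral radius λ = λ(G), and t(G) triangles. Then t(G) ≥ λ(λ² − m)/3, and equality holds if and only if G is a complete bipartite graph, possibly together with isolated vertices. -/

import Mathlib

open Classical in
/-- Adjacency matrix of a simple graph, over `ℝ`. -/
noncomputable def adjMat {V : Type*} [Fintype V] (G : SimpleGraph V) : Matrix V V ℝ :=
  Matrix.of fun i j => if G.Adj i j then 1 else 0

/-- Spectral radius (largest eigenvalue) of a finite simple graph: the supremum of the
real spectrum of its adjacency matrix. -/
noncomputable def specRad {V : Type*} [Fintype V] [DecidableEq V]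
    (G : SimpleGraph V) : ℝ :=
  sSup (spectrum ℝ (adjMat G))

/-- Number of edges of a graph. -/
noncomputable def edgeCount {V : Type*} (G : SimpleGraph V) : ℕ := G.edgeSet.ncard

/-- Number of triangles of a graph. -/
noncomputable def triangleCount {V : Type*} (G : SimpleGraph V) : ℕ :=
  {t : Finset V | G.IsNClique 3 t}.ncard

/-- Triangle covering number: minimum size of a vertex set meeting every triangle. -/
noncomputable def triangleCoverNumber {V : Type*} [Fintype V] [DecidableEq V]
    (G : SimpleGraph V) : ℕ :=
  sInf {k | ∃ s : Finset V, s.card = k ∧ ∀ t : Finset V, G.IsNClique 3 t → ∃ v ∈ s, v ∈ t}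

/-- Number of bowties: unordered pairs of triangles sharing exactly one vertex. -/
noncomputable def bowtieCount {V : Type*} [DecidableEq V] (G : SimpleGraph V) : ℕ :=
  {p : Finset (Finset V) | p.card = 2 ∧ (∀ t ∈ p, G.IsNClique 3 t) ∧
    ∀ t₁ ∈ p, ∀ t₂ ∈ p, t₁ ≠ t₂ → (t₁ ∩ t₂).card = 1}.ncard

/-- Complete bipartite graph on `Fin n` with parts `[0, s)` and `[s, n)`. -/
def biGraph (n s : ℕ) : SimpleGraph (Fin n) :=
  SimpleGraph.fromRel (fun i j => (i : ℕ) < s ∧ s ≤ (j : ℕ))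

/-- `K_{s,t}^{+2}`: complete bipartite with two disjoint extra edges `{0,1}`, `{2,3}`
inside the part `[0, s)`. -/
def biGraphPlus2 (n s : ℕ) : SimpleGraph (Fin n) :=
  SimpleGraph.fromRel (fun i j => ((i : ℕ) < s ∧ s ≤ (j : ℕ)) ∨
    ((i : ℕ) = 0 ∧ (j : ℕ) = 1) ∨ ((i : ℕ) = 2 ∧ (j : ℕ) = 3))

/-- `K_{s,t}^{+}`: complete bipartite with one extra edge `{0,1}` inside the part `[0, s)`. -/
def biGraphPlus1 (n s : ℕ) : SimpleGraph (Fin n) :=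
  SimpleGraph.fromRel (fun i j => ((i : ℕ) < s ∧ s ≤ (j : ℕ)) ∨ ((i : ℕ) = 0 ∧ (j : ℕ) = 1))

/-- `K_{s,t}^{++}`: complete bipartite with one extra edge in each part. -/
def biGraphPlusPlus (n s : ℕ) : SimpleGraph (Fin n) :=
  SimpleGraph.fromRel (fun i j => ((i : ℕ) < s ∧ s ≤ (j : ℕ)) ∨
    ((i : ℕ) = 0 ∧ (j : ℕ) = 1) ∨ ((i : ℕ) = s ∧ (j : ℕ) = s + 1))

/-- The friendship graph `F_k`: `k` triangles meeting in the common vertex `0`. -/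
def friendship (k : ℕ) : SimpleGraph (Fin (2 * k + 1)) :=
  SimpleGraph.fromRel (fun a b => ((a : ℕ) = 0 ∧ (b : ℕ) ≠ 0) ∨
    ((a : ℕ) % 2 = 1 ∧ (b : ℕ) = (a : ℕ) + 1))

/-- `G` contains a copy of `H` (a subgraph isomorphic to `H`). -/
def ContainsCopy {α β : Type*} (H : SimpleGraph α) (G : SimpleGraph β) : Prop :=
  ∃ f : α → β, Function.Injective f ∧ ∀ a b, H.Adj a b → G.Adj (f a) (f b)

/-- Number of edges of `G` with both endpoints in `S`. -/
noncomputable def eIn {V : Type*} (G : SimpleGraph V) (S : Finset V) : ℕ :=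
  {e ∈ G.edgeSet | ∀ v ∈ e, v ∈ S}.ncard

/-- Number of edges of `G` with one endpoint in `S` and the other in `T`. -/
noncomputable def eCross {V : Type*} (G : SimpleGraph V) (S T : Finset V) : ℕ :=
  {e ∈ G.edgeSet | ∃ u ∈ S, ∃ v ∈ T, e = s(u, v)}.ncard

/-- `G` is `ε`-far from being bipartite: every spanning subgraph obtained by removing
fewer than `ε` edges is non-bipartite. -/
def FarFromBipartite {V : Type*} (G : SimpleGraph V) (ε : ℝ) : Prop :=
  ∀ G' : SimpleGraph V, G' ≤ G → (edgeCount G : ℝ) - ε < (edgeCount G' : ℝ) →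
    ¬ G'.Colorable 2


namespace St8

open Classical Matrix

lemma triple_perm {V : Type*} {a b c i j k : V} (hij : i ≠ j) (hjk : j ≠ k) (hki : k ≠ i)
    (hi : i = a ∨ i = b ∨ i = c) (hj : j = a ∨ j = b ∨ j = c) (hk : k = a ∨ k = b ∨ k = c) :
    (i = a ∧ j = b ∧ k = c) ∨ (i = a ∧ j = c ∧ k = b) ∨ (i = b ∧ j = a ∧ k = c) ∨
    (i = b ∧ j = c ∧ k = a) ∨ (i = c ∧ j = a ∧ k = b) ∨ (i = c ∧ j = b ∧ k = a) := by
  rcases hi with rfl | rfl | rfl <;> rcases hj with rfl | rfl | rfl <;>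
    rcases hk with rfl | rfl | rfl <;> simp_all

lemma adjMat_nonneg {V : Type*} [Fintype V] (G : SimpleGraph V) (i j : V) :
    0 ≤ adjMat G i j := by
  simp only [adjMat, Matrix.of_apply]; split <;> norm_num

lemma adjMat_apply_of_adj {V : Type*} [Fintype V] {G : SimpleGraph V} {i j : V}
    (h : G.Adj i j) : adjMat G i j = 1 := by simp [adjMat, h]

lemma adj_of_adjMat_ne_zero {V : Type*} [Fintype V] {G : SimpleGraph V} {i j : V}
    (h : adjMat G i j ≠ 0) : G.Adj i j := by
  by_contra hc; simp [adjMat, hc] at h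

lemma adjMat_isHermitian {V : Type*} [Fintype V] (G : SimpleGraph V) :
    (adjMat G).IsHermitian := by
  ext i j
  simp only [Matrix.conjTranspose_apply, adjMat, Matrix.of_apply, star_trivial]
  rw [SimpleGraph.adj_comm]

section comb
variable {V : Type*} [Fintype V] [DecidableEq V] (G : SimpleGraph V)

lemma adjMat_eq : adjMat G = G.adjMatrix ℝ := by
  ext i j; simp [adjMat, SimpleGraph.adjMatrix]

lemma edgeCount_eq : edgeCount G = G.edgeFinset.card := by
  rw [edgeCount, SimpleGraph.edgeFinset, Set.ncard_eq_toFinset_card']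

lemma triangleCount_eq : triangleCount G = (G.cliqueFinset 3).card := by
  rw [triangleCount, show {t : Finset V | G.IsNClique 3 t} = ↑(G.cliqueFinset 3) by
    ext t; simp [SimpleGraph.mem_cliqueFinset_iff], Set.ncard_coe_finset]

lemma trace_one : (adjMat G).trace = 0 := by
  rw [adjMat_eq]; exact SimpleGraph.trace_adjMatrix ℝ G

lemma trace_sq : ((adjMat G) ^ 2).trace = 2 * (edgeCount G : ℝ) := by
  rw [adjMat_eq, pow_two, Matrix.trace]
  have h : ∀ i, ((G.adjMatrix ℝ) * (G.adjMatrix ℝ)).diag i = (G.degree i : ℝ) := by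
    intro i
    simpa using G.adjMatrix_mul_self_apply_self (α := ℝ) i
  rw [Finset.sum_congr rfl (fun i _ => h i), ← Nat.cast_sum,
    SimpleGraph.sum_degrees_eq_twice_card_edges, edgeCount_eq]
  push_cast; ring

noncomputable def triFinset : Finset (V × V × V) :=
  Finset.univ.filter (fun p => G.Adj p.1 p.2.1 ∧ G.Adj p.2.1 p.2.2 ∧ G.Adj p.2.2 p.1)

lemma trace_cube : ((adjMat G) ^ 3).trace = ((triFinset G).card : ℝ) := by
  have hent : ∀ i j k : V, adjMat G i j * adjMat G j k * adjMat G k i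
      = if (G.Adj i j ∧ G.Adj j k ∧ G.Adj k i) then (1:ℝ) else 0 := by
    intro i j k
    by_cases h1 : G.Adj i j <;> by_cases h2 : G.Adj j k <;> by_cases h3 : G.Adj k i <;>
      simp [adjMat, h1, h2, h3]
  have h1 : ((adjMat G) ^ 3).trace = ∑ i : V, ∑ j : V, ∑ k : V,
      adjMat G i j * adjMat G j k * adjMat G k i := by
    rw [pow_succ, pow_two, Matrix.trace]
    simp only [Matrix.diag_apply, Matrix.mul_apply, Finset.sum_mul]
    exact Finset.sum_congr rfl fun i _ => Finset.sum_comm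
  rw [h1, triFinset, Finset.card_filter]
  push_cast
  rw [Fintype.sum_prod_type]
  refine Finset.sum_congr rfl fun i _ => ?_
  rw [Fintype.sum_prod_type]
  exact Finset.sum_congr rfl fun j _ => Finset.sum_congr rfl fun k _ => hent i j k

lemma triFinset_card : (triFinset G).card = 6 * (G.cliqueFinset 3).card := by
  rw [Finset.card_eq_sum_card_fiberwise
    (f := fun p : V × V × V => ({p.1, p.2.1, p.2.2} : Finset V)) (t := G.cliqueFinset 3)
    (by
      rintro ⟨i, j, k⟩ hp
      simp only [triFinset, Finset.mem_coe, Finset.mem_filter] at hp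
      obtain ⟨-, h1, h2, h3⟩ := hp
      rw [Finset.mem_coe, SimpleGraph.mem_cliqueFinset_iff]
      exact SimpleGraph.is3Clique_triple_iff.2 ⟨h1, h3.symm, h2⟩)]
  rw [Finset.sum_congr rfl (fun t ht => ?_), Finset.sum_const, smul_eq_mul, mul_comm]
  rw [SimpleGraph.mem_cliqueFinset_iff] at ht
  obtain ⟨a, b, c, hab, hac, hbc, rfl⟩ := Finset.card_eq_three.1 ht.card_eq
  obtain ⟨hAab, hAac, hAbc⟩ := SimpleGraph.is3Clique_triple_iff.1 ht
  have key : (triFinset G).filter (fun p => ({p.1, p.2.1, p.2.2} : Finset V) = {a, b, c})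
      = {(a,b,c), (a,c,b), (b,a,c), (b,c,a), (c,a,b), (c,b,a)} := by
    ext ⟨i, j, k⟩
    simp only [Finset.mem_filter, triFinset, Finset.mem_univ, true_and, Finset.mem_insert,
      Finset.mem_singleton, Prod.mk.injEq]
    constructor
    · rintro ⟨⟨h1, h2, h3⟩, hset⟩
      have hmem : ∀ x : V, x ∈ ({i, j, k} : Finset V) → x = a ∨ x = b ∨ x = c := by
        intro x hx
        rw [hset] at hx
        simpa using hx
      exact triple_perm h1.ne h2.ne h3.ne (hmem i (by simp)) (hmem j (by simp))
        (hmem k (by simp))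
    · rintro (⟨rfl, rfl, rfl⟩ | ⟨rfl, rfl, rfl⟩ | ⟨rfl, rfl, rfl⟩ | ⟨rfl, rfl, rfl⟩ |
        ⟨rfl, rfl, rfl⟩ | ⟨rfl, rfl, rfl⟩) <;>
      refine ⟨⟨?_, ?_, ?_⟩, ?_⟩ <;>
      first
        | exact hAab | exact hAab.symm | exact hAac | exact hAac.symm
        | exact hAbc | exact hAbc.symm
        | (ext x; simp only [Finset.mem_insert, Finset.mem_singleton]; try tauto)
  rw [key]
  have n1 : (a,b,c) ∉ ({(a,c,b), (b,a,c), (b,c,a), (c,a,b), (c,b,a)} : Finset (V×V×V)) := by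
    simp only [Finset.mem_insert, Finset.mem_singleton, Prod.mk.injEq]; tauto
  have n2 : (a,c,b) ∉ ({(b,a,c), (b,c,a), (c,a,b), (c,b,a)} : Finset (V×V×V)) := by
    simp only [Finset.mem_insert, Finset.mem_singleton, Prod.mk.injEq]; tauto
  have n3 : (b,a,c) ∉ ({(b,c,a), (c,a,b), (c,b,a)} : Finset (V×V×V)) := by
    simp only [Finset.mem_insert, Finset.mem_singleton, Prod.mk.injEq]; tauto
  have n4 : (b,c,a) ∉ ({(c,a,b), (c,b,a)} : Finset (V×V×V)) := by
    simp only [Finset.mem_insert, Finset.mem_singleton, Prod.mk.injEq]; tauto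
  have n5 : (c,a,b) ∉ ({(c,b,a)} : Finset (V×V×V)) := by
    simp only [Finset.mem_singleton, Prod.mk.injEq]; tauto
  rw [Finset.card_insert_of_notMem n1, Finset.card_insert_of_notMem n2,
    Finset.card_insert_of_notMem n3, Finset.card_insert_of_notMem n4,
    Finset.card_insert_of_notMem n5, Finset.card_singleton]

lemma trace_cube' : ((adjMat G) ^ 3).trace = 6 * (triangleCount G : ℝ) := by
  rw [trace_cube, triFinset_card, triangleCount_eq]; push_cast; ring

end comb

section spec
variable {V : Type*} [Fintype V] [DecidableEq V] (G : SimpleGraph V)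

noncomputable def evals : V → ℝ := (adjMat_isHermitian G).eigenvalues

noncomputable def evU : Matrix V V ℝ :=
  ((adjMat_isHermitian G).eigenvectorUnitary : Matrix V V ℝ)

lemma star_evU_mul : star (evU G) * evU G = 1 :=
  Unitary.coe_star_mul_self (adjMat_isHermitian G).eigenvectorUnitary

lemma evU_mul_star : evU G * star (evU G) = 1 :=
  Unitary.coe_mul_star_self (adjMat_isHermitian G).eigenvectorUnitary

lemma spectral : adjMat G = evU G * Matrix.diagonal (RCLike.ofReal ∘ evals G) * star (evU G) :=
  (adjMat_isHermitian G).spectral_theorem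

local notation "μ" => evals G
local notation "U" => evU G

lemma colU (i i' : V) : ∑ j, U j i * U j i' = if i = i' then (1:ℝ) else 0 := by
  have h : (star U * U) i i' = (1 : Matrix V V ℝ) i i' := by
    rw [star_evU_mul]
  rw [Matrix.mul_apply, Matrix.one_apply] at h
  simpa [Matrix.star_apply] using h

lemma rowU (j l : V) : ∑ i, U j i * U l i = if j = l then (1:ℝ) else 0 := by
  have h : (U * star U) j l = (1 : Matrix V V ℝ) j l := by
    rw [evU_mul_star]
  rw [Matrix.mul_apply, Matrix.one_apply] at h
  simpa [Matrix.star_apply] using h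

lemma adjMat_entry (j l : V) : adjMat G j l = ∑ i, μ i * (U j i * U l i) := by
  conv_lhs => rw [spectral G]
  rw [Matrix.mul_apply]
  refine Finset.sum_congr rfl fun i _ => ?_
  rw [Matrix.mul_diagonal]
  simp only [Matrix.star_apply, star_trivial, Function.comp_apply, RCLike.ofReal_real_eq_id,
    id_eq]
  ring

lemma sum_mul_sum' (f g : V → ℝ) :
    (∑ j, f j) * (∑ l, g l) = ∑ j, ∑ l, f j * g l := by
  rw [Finset.sum_mul]
  exact Finset.sum_congr rfl fun j _ => Finset.mul_sum _ _ _

lemma quad_eq (x : V → ℝ) :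
    dotProduct x (adjMat G *ᵥ x) = ∑ i, μ i * (∑ j, x j * U j i) ^ 2 := by
  have h1 : dotProduct x (adjMat G *ᵥ x) = ∑ j, x j * ∑ l, adjMat G j l * x l := rfl
  rw [h1]
  calc ∑ j, x j * ∑ l, adjMat G j l * x l
      = ∑ j, ∑ l, ∑ i, μ i * ((x j * U j i) * (x l * U l i)) := by
        refine Finset.sum_congr rfl fun j _ => ?_
        rw [Finset.mul_sum]
        refine Finset.sum_congr rfl fun l _ => ?_
        rw [adjMat_entry, Finset.sum_mul, Finset.mul_sum]
        exact Finset.sum_congr rfl fun i _ => by ring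
    _ = ∑ j, ∑ i, ∑ l, μ i * ((x j * U j i) * (x l * U l i)) :=
        Finset.sum_congr rfl fun j _ => Finset.sum_comm
    _ = ∑ i, ∑ j, ∑ l, μ i * ((x j * U j i) * (x l * U l i)) := Finset.sum_comm
    _ = ∑ i, μ i * (∑ j, x j * U j i) ^ 2 := by
        refine Finset.sum_congr rfl fun i _ => ?_
        rw [sq, sum_mul_sum' (fun j => x j * U j i) (fun l => x l * U l i), Finset.mul_sum]
        exact Finset.sum_congr rfl fun j _ => (Finset.mul_sum _ _ _).symm

lemma norm_eq (x : V → ℝ) :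
    dotProduct x x = ∑ i, (∑ j, x j * U j i) ^ 2 := by
  have h1 : ∀ i, (∑ j, x j * U j i) ^ 2 = ∑ j, ∑ l, (x j * x l) * (U j i * U l i) := by
    intro i
    rw [sq, sum_mul_sum' (fun j => x j * U j i) (fun l => x l * U l i)]
    exact Finset.sum_congr rfl fun j _ => Finset.sum_congr rfl fun l _ => by ring
  rw [Finset.sum_congr rfl fun i (_ : i ∈ Finset.univ) => h1 i, Finset.sum_comm]
  have h2 : ∀ j, ∑ i, ∑ l, (x j * x l) * (U j i * U l i)
      = ∑ l, (x j * x l) * ∑ i, U j i * U l i := by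
    intro j
    rw [Finset.sum_comm]
    exact Finset.sum_congr rfl fun l _ => (Finset.mul_sum _ _ _).symm
  rw [Finset.sum_congr rfl fun j (_ : j ∈ Finset.univ) => h2 j]
  have h3 : ∀ j, ∑ l, (x j * x l) * ∑ i, U j i * U l i = x j * x j := by
    intro j
    rw [Finset.sum_congr rfl fun l (_ : l ∈ Finset.univ) => by rw [rowU]]
    rw [Finset.sum_eq_single j]
    · simp
    · intro l _ hne
      rw [if_neg (Ne.symm hne), mul_zero]
    · intro h; exact absurd (Finset.mem_univ j) h
  rw [Finset.sum_congr rfl fun j (_ : j ∈ Finset.univ) => h3 j]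
  rfl

lemma trace_pow_eq (k : ℕ) : ((adjMat G) ^ k).trace = ∑ i, μ i ^ k := by
  set hA := adjMat_isHermitian G
  have hUU : star (evU G) * evU G = 1 := star_evU_mul G
  set D : Matrix V V ℝ := Matrix.diagonal (RCLike.ofReal ∘ evals G) with hD
  have hpow : (adjMat G) ^ k = evU G * D ^ k * star (evU G) := by
    induction k with
    | zero =>
      simp only [pow_zero, Matrix.mul_one]
      exact (evU_mul_star G).symm
    | succ k ih =>
      rw [pow_succ, ih, pow_succ, spectral G,
        show evU G * D ^ k * star (evU G) * (evU G * D * star (evU G))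
          = evU G * D ^ k * (star (evU G) * evU G) * D * star (evU G) by noncomm_ring,
        hUU, Matrix.mul_one, Matrix.mul_assoc (evU G) (D ^ k) D,
        Matrix.mul_assoc (evU G) (D ^ k * D) (star (evU G))]
  rw [hpow, Matrix.trace_mul_cycle, hUU, Matrix.one_mul, hD,
    Matrix.diagonal_pow, Matrix.trace_diagonal]
  simp

lemma specRad_le [Nonempty V] (i : V) : μ i ≤ specRad G := by
  rw [specRad, (adjMat_isHermitian G).spectrum_real_eq_range_eigenvalues]
  exact le_csSup (Set.finite_range _).bddAbove ⟨i, rfl⟩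

lemma specRad_attained [Nonempty V] : ∃ i₀ : V, μ i₀ = specRad G := by
  have h : sSup (Set.range (evals G)) ∈ Set.range (evals G) :=
    (Set.range_nonempty _).csSup_mem (Set.finite_range _)
  obtain ⟨i₀, hi₀⟩ := h
  refine ⟨i₀, ?_⟩
  rw [specRad, (adjMat_isHermitian G).spectrum_real_eq_range_eigenvalues]
  exact hi₀

lemma sum_evals_eq_zero : ∑ i, μ i = 0 := by
  have h := trace_pow_eq G 1
  simp only [pow_one] at h
  rw [← h, Matrix.trace]
  refine Finset.sum_eq_zero fun i _ => ?_
  simp [Matrix.diag_apply, adjMat]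

lemma specRad_nonneg [Nonempty V] : 0 ≤ specRad G := by
  by_contra h
  push_neg at h
  have h1 : ∑ i, μ i < 0 := by
    calc ∑ i, μ i ≤ ∑ _i : V, specRad G := Finset.sum_le_sum fun i _ => specRad_le G i
    _ = (Fintype.card V : ℝ) * specRad G := by rw [Finset.sum_const]; simp [mul_comm]
    _ < 0 := by
        apply mul_neg_of_pos_of_neg _ h
        exact_mod_cast Fintype.card_pos
  rw [sum_evals_eq_zero] at h1
  exact lt_irrefl _ h1

lemma rayleigh_le [Nonempty V] (x : V → ℝ) :
    dotProduct x (adjMat G *ᵥ x) ≤ specRad G * dotProduct x x := by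
  rw [quad_eq, norm_eq, Finset.mul_sum]
  refine Finset.sum_le_sum fun i _ => ?_
  have := sq_nonneg (∑ j, x j * U j i)
  nlinarith [specRad_le G i]

lemma col_eigen (i : V) :
    adjMat G *ᵥ (fun j => U j i) = (μ i) • (fun j => U j i) := by
  have h := (adjMat_isHermitian G).mulVec_eigenvectorBasis i
  have hcol : ⇑((adjMat_isHermitian G).eigenvectorBasis i) = fun j => U j i := by
    funext j
    exact ((adjMat_isHermitian G).eigenvectorUnitary_apply j i).symm
  rw [hcol] at h
  exact h

lemma abs_evals_le [Nonempty V] (i : V) : |μ i| ≤ specRad G := by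
  set lam := specRad G
  rw [abs_le]
  refine ⟨?_, specRad_le G i⟩
  set u : V → ℝ := fun j => U j i with hu
  set w : V → ℝ := fun j => |u j| with hw
  have huu : dotProduct u u = 1 := by
    have := colU G i i
    simp only [if_pos rfl] at this
    exact this
  have hww : dotProduct w w = 1 := by
    rw [dotProduct] at huu ⊢
    rw [← huu]
    exact Finset.sum_congr rfl fun j _ => abs_mul_abs_self (u j)
  have hAu : dotProduct u (adjMat G *ᵥ u) = μ i := by
    rw [col_eigen G i]
    have : dotProduct u ((μ i) • u) = μ i * dotProduct u u := by
      rw [dotProduct, dotProduct, Finset.mul_sum]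
      refine Finset.sum_congr rfl fun j _ => ?_
      simp only [Pi.smul_apply, smul_eq_mul]
      ring
    rw [this, huu, mul_one]
  have hbound : -(dotProduct u (adjMat G *ᵥ u))
      ≤ dotProduct w (adjMat G *ᵥ w) := by
    have hterm : ∀ j l, -(u j * (adjMat G j l * u l)) ≤ w j * (adjMat G j l * w l) := by
      intro j l
      have h1 : |u j * (adjMat G j l * u l)| = w j * (adjMat G j l * w l) := by
        simp only [hw, abs_mul, abs_of_nonneg (adjMat_nonneg G j l)]
      rw [← h1]
      exact neg_le_abs _
    have hexp : ∀ y : V → ℝ, dotProduct y (adjMat G *ᵥ y)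
        = ∑ j, ∑ l, y j * (adjMat G j l * y l) := by
      intro y
      rw [show dotProduct y (adjMat G *ᵥ y) = ∑ j, y j * ∑ l, adjMat G j l * y l from rfl]
      exact Finset.sum_congr rfl fun j _ => Finset.mul_sum _ _ _
    rw [hexp u, hexp w, ← Finset.sum_neg_distrib]
    refine Finset.sum_le_sum fun j _ => ?_
    rw [← Finset.sum_neg_distrib]
    exact Finset.sum_le_sum fun l _ => hterm j l
  have hray := rayleigh_le G w
  rw [hww, mul_one] at hray
  rw [hAu] at hbound
  linarith

lemma mem_spectrum_of_eigenvector {A : Matrix V V ℝ} {c : ℝ} {x : V → ℝ} (hx : x ≠ 0)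
    (hAx : A *ᵥ x = c • x) : c ∈ spectrum ℝ A := by
  rw [spectrum.mem_iff]
  intro hunit
  have hdet : ((algebraMap ℝ (Matrix V V ℝ)) c - A).det ≠ 0 := by
    intro h0
    rw [Matrix.isUnit_iff_isUnit_det, h0] at hunit
    exact hunit.ne_zero rfl
  have hmv : ((algebraMap ℝ (Matrix V V ℝ)) c - A) *ᵥ x = 0 := by
    rw [Matrix.sub_mulVec, hAx]
    have : (algebraMap ℝ (Matrix V V ℝ)) c *ᵥ x = c • x := by
      rw [Algebra.algebraMap_eq_smul_one]
      rw [Matrix.smul_mulVec, Matrix.one_mulVec]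
    rw [this, sub_self]
  exact hdet (Matrix.exists_mulVec_eq_zero_iff.mp ⟨x, hx, hmv⟩)

lemma specRad_bot [Nonempty V] (h : ∀ u v, ¬ G.Adj u v) : specRad G = 0 := by
  have hA0 : adjMat G = 0 := by
    ext i j
    simp only [adjMat, Matrix.of_apply, Matrix.zero_apply, ite_eq_right_iff]
    exact fun hadj => absurd hadj (h i j)
  haveI : Nontrivial (Matrix V V ℝ) := by
    refine ⟨0, 1, fun hc => ?_⟩
    have := congrFun (congrFun hc (Classical.arbitrary V)) (Classical.arbitrary V)
    simp [Matrix.one_apply] at this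
  rw [specRad, hA0, spectrum.zero_eq, csSup_singleton]

end spec

section bip
variable {V : Type*} [Fintype V] (G : SimpleGraph V) (A B : Set V)

lemma triangleCount_bip (hd : Disjoint A B)
    (hadj : ∀ u v, G.Adj u v ↔ ((u ∈ A ∧ v ∈ B) ∨ (u ∈ B ∧ v ∈ A))) :
    triangleCount G = 0 := by
  rw [triangleCount, Set.ncard_eq_zero (Set.toFinite _), Set.eq_empty_iff_forall_notMem]
  intro t ht
  rw [Set.mem_setOf_eq, SimpleGraph.is3Clique_iff] at ht
  obtain ⟨a, b, c, hab, hac, hbc, rfl⟩ := ht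
  have hD := Set.disjoint_left.mp hd
  rw [hadj] at hab hac hbc
  tauto

lemma edgeCount_eq_zero_of_bot (h : ∀ u v, ¬ G.Adj u v) : edgeCount G = 0 := by
  rw [edgeCount, Set.ncard_eq_zero (Set.toFinite _), Set.eq_empty_iff_forall_notMem]
  intro e he
  induction e with
  | _ u v => exact h u v (G.mem_edgeSet.mp he)

lemma edgeCount_bip (hd : Disjoint A B)
    (hadj : ∀ u v, G.Adj u v ↔ ((u ∈ A ∧ v ∈ B) ∨ (u ∈ B ∧ v ∈ A))) :
    edgeCount G = A.ncard * B.ncard := by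
  have hD := Set.disjoint_left.mp hd
  have hset : G.edgeSet = (fun p : V × V => s(p.1, p.2)) '' (A ×ˢ B) := by
    ext e
    induction e with
    | _ u v =>
      rw [SimpleGraph.mem_edgeSet, hadj]
      constructor
      · rintro (⟨hu, hv⟩ | ⟨hu, hv⟩)
        · exact ⟨(u, v), Set.mk_mem_prod hu hv, rfl⟩
        · exact ⟨(v, u), Set.mk_mem_prod hv hu, Sym2.eq_swap⟩
      · rintro ⟨⟨a, b⟩, ⟨ha, hb⟩, hab⟩
        simp only [Sym2.eq, Sym2.rel_iff', Prod.mk.injEq, Prod.swap_prod_mk] at hab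
        rcases hab with ⟨rfl, rfl⟩ | ⟨rfl, rfl⟩
        · exact Or.inl ⟨ha, hb⟩
        · exact Or.inr ⟨hb, ha⟩
  rw [edgeCount, hset, Set.ncard_image_of_injOn, ← Nat.card_coe_set_eq,
    Nat.card_congr (Equiv.Set.prod A B), Nat.card_prod, Nat.card_coe_set_eq,
    Nat.card_coe_set_eq]
  rintro ⟨a, b⟩ ⟨ha, hb⟩ ⟨a', b'⟩ ⟨ha', hb'⟩ hab
  simp only [Sym2.eq, Sym2.rel_iff', Prod.mk.injEq, Prod.swap_prod_mk] at hab
  rcases hab with ⟨rfl, rfl⟩ | ⟨rfl, rfl⟩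
  · rfl
  · exact absurd ha' (fun h => hD h hb)

lemma bip_eigenvec (hd : Disjoint A B)
    (hadj : ∀ u v, G.Adj u v ↔ ((u ∈ A ∧ v ∈ B) ∨ (u ∈ B ∧ v ∈ A)))
    (hA : A.Nonempty) (hB : B.Nonempty) :
    ∃ x : V → ℝ, x ≠ 0 ∧
      adjMat G *ᵥ x = Real.sqrt ((A.ncard : ℝ) * B.ncard) • x := by
  classical
  have hD := Set.disjoint_left.mp hd
  set a : ℝ := (A.ncard : ℝ) with ha
  set b : ℝ := (B.ncard : ℝ) with hb
  have ha0 : 0 ≤ a := Nat.cast_nonneg _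
  have hb0 : 0 ≤ b := Nat.cast_nonneg _
  set x : V → ℝ := fun u => if u ∈ A then Real.sqrt b else if u ∈ B then Real.sqrt a else 0
    with hx
  have hfilA : Finset.univ.filter (fun v => v ∈ A) = A.toFinset := by ext v; simp
  have hfilB : Finset.univ.filter (fun v => v ∈ B) = B.toFinset := by ext v; simp
  have hcardA : ∀ c : ℝ, ∑ v : V, (if v ∈ A then c else 0) = a * c := by
    intro c
    rw [← Finset.sum_filter, hfilA, Finset.sum_const, nsmul_eq_mul, ha,
      Set.ncard_eq_toFinset_card' A]
  have hcardB : ∀ c : ℝ, ∑ v : V, (if v ∈ B then c else 0) = b * c := by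
    intro c
    rw [← Finset.sum_filter, hfilB, Finset.sum_const, nsmul_eq_mul, hb,
      Set.ncard_eq_toFinset_card' B]
  refine ⟨x, ?_, ?_⟩
  · obtain ⟨u, hu⟩ := hA
    intro hx0
    have : x u = 0 := congrFun hx0 u
    rw [hx] at this
    simp only [if_pos hu] at this
    have hbpos : 0 < b := by
      rw [hb]
      exact_mod_cast (Set.ncard_pos (Set.toFinite _)).mpr hB
    exact absurd this (by positivity)
  · funext u
    have hmv : (adjMat G *ᵥ x) u = ∑ v, adjMat G u v * x v := rfl
    rw [hmv]
    by_cases huA : u ∈ A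
    · have hAdj : ∀ v, adjMat G u v * x v = if v ∈ B then Real.sqrt a else 0 := by
        intro v
        by_cases hvB : v ∈ B
        · have : G.Adj u v := (hadj u v).mpr (Or.inl ⟨huA, hvB⟩)
          simp only [adjMat, Matrix.of_apply, if_pos this, one_mul, hx, if_pos hvB,
            if_neg (fun h => hD h hvB), hvB, if_true]
        · have : ¬ G.Adj u v := by
            rw [hadj]
            rintro (⟨_, hv⟩ | ⟨hu, _⟩)
            · exact hvB hv
            · exact hD huA hu
          simp [adjMat, this, hvB]
      rw [Finset.sum_congr rfl fun v _ => hAdj v, hcardB]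
      simp only [Pi.smul_apply, hx, if_pos huA, smul_eq_mul]
      rw [Real.sqrt_mul ha0]
      linear_combination (-Real.sqrt a) * (Real.mul_self_sqrt hb0)
    · by_cases huB : u ∈ B
      · have hAdj : ∀ v, adjMat G u v * x v = if v ∈ A then Real.sqrt b else 0 := by
          intro v
          by_cases hvA : v ∈ A
          · have : G.Adj u v := (hadj u v).mpr (Or.inr ⟨huB, hvA⟩)
            simp only [adjMat, Matrix.of_apply, if_pos this, one_mul, hx, if_pos hvA]
          · have : ¬ G.Adj u v := by
              rw [hadj]
              rintro (⟨hu, _⟩ | ⟨_, hv⟩)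
              · exact hD hu huB
              · exact hvA hv
            simp [adjMat, this, hvA]
        rw [Finset.sum_congr rfl fun v _ => hAdj v, hcardA]
        simp only [Pi.smul_apply, hx, if_neg huA, if_pos huB, smul_eq_mul]
        rw [Real.sqrt_mul ha0]
        linear_combination (-Real.sqrt b) * (Real.mul_self_sqrt ha0)
      · have hAdj : ∀ v, adjMat G u v * x v = 0 := by
          intro v
          have : ¬ G.Adj u v := by
            rw [hadj]
            rintro (⟨hu, _⟩ | ⟨hu, _⟩)
            · exact huA hu
            · exact huB hu
          simp [adjMat, this]
        rw [Finset.sum_congr rfl fun v _ => hAdj v, Finset.sum_const_zero]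
        simp only [Pi.smul_apply, hx, if_neg huA, if_neg huB, smul_eq_mul, mul_zero]

end bip

end St8

open St8 in

/-- **spectral triangle counting lemma.** For any graph `G` with `m` edges,
`t(G) ≥ λ(λ² − m)/3`, with equality iff `G` is a complete bipartite graph possibly together
with isolated vertices. -/
theorem stmt_8 (n : ℕ) (G : SimpleGraph (Fin n)) :
    specRad G * (specRad G ^ 2 - (edgeCount G : ℝ)) / 3 ≤ (triangleCount G : ℝ) ∧
    ((triangleCount G : ℝ) = specRad G * (specRad G ^ 2 - (edgeCount G : ℝ)) / 3 ↔
      ∃ A B : Set (Fin n), Disjoint A B ∧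
        ∀ u v, G.Adj u v ↔ ((u ∈ A ∧ v ∈ B) ∨ (u ∈ B ∧ v ∈ A))) := by
  rcases Nat.eq_zero_or_pos n with hn | hn
  · subst hn
    have hm : edgeCount G = 0 := edgeCount_eq_zero_of_bot G (fun u v _ => (u : Fin 0).elim0)
    have ht : triangleCount G = 0 := by
      rw [triangleCount, Set.ncard_eq_zero (Set.toFinite _), Set.eq_empty_iff_forall_notMem]
      intro t htc
      rw [Set.mem_setOf_eq] at htc
      have hcard := htc.card_eq
      have h3 : t = ∅ := Finset.eq_empty_of_isEmpty t
      rw [h3] at hcard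
      simp at hcard
    have hl : specRad G = 0 := by
      haveI : Subsingleton (Matrix (Fin 0) (Fin 0) ℝ) :=
        ⟨fun M N => by ext i j; exact i.elim0⟩
      rw [specRad, show spectrum ℝ (adjMat G) = ∅ from Set.eq_empty_iff_forall_notMem.mpr
        (fun x hx => (spectrum.mem_iff.mp hx) (isUnit_of_subsingleton _)), Real.sSup_empty]
    rw [hm, ht, hl]
    refine ⟨by norm_num, ?_, fun _ => by norm_num⟩
    intro _
    exact ⟨∅, ∅, disjoint_bot_left, fun u v => u.elim0⟩
  · haveI : Nonempty (Fin n) := ⟨⟨0, hn⟩⟩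
    set lam := specRad G with hlam
    set m : ℕ := edgeCount G with hm
    set t : ℕ := triangleCount G with ht
    obtain ⟨i₀, hi₀⟩ := specRad_attained G
    have habs := abs_evals_le G
    have h0 := sum_evals_eq_zero G
    have h2 : ∑ i, evals G i ^ 2 = 2 * (m : ℝ) := by rw [← trace_pow_eq]; exact trace_sq G
    have h3 : ∑ i, evals G i ^ 3 = 6 * (t : ℝ) := by rw [← trace_pow_eq]; exact trace_cube' G
    have hnn : 0 ≤ lam := specRad_nonneg G
    have hkey : ∑ i, (evals G i)^2 * (evals G i + lam) = 6 * (t:ℝ) + lam * (2 * m) := by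
      rw [Finset.sum_congr rfl fun i (_ : i ∈ Finset.univ) =>
        (by ring : (evals G i)^2 * (evals G i + lam) = evals G i ^3 + lam * evals G i^2)]
      rw [Finset.sum_add_distrib, h3, ← Finset.mul_sum, h2]
    have hterm : ∀ i, 0 ≤ (evals G i)^2 * (evals G i + lam) := fun i => by
      have h := (abs_le.1 (habs i)).1
      exact mul_nonneg (sq_nonneg _) (by linarith)
    have hsingle : (evals G i₀)^2 * (evals G i₀ + lam)
        ≤ ∑ i, (evals G i)^2 * (evals G i + lam) :=
      Finset.single_le_sum (fun i _ => hterm i) (Finset.mem_univ i₀)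
    rw [hi₀, hkey] at hsingle
    have hmain : 2 * lam^3 ≤ 6 * (t:ℝ) + lam * (2*m) := by nlinarith [hsingle]
    have hineq : lam * (lam ^ 2 - (m : ℝ)) / 3 ≤ (t : ℝ) := by nlinarith [hmain]
    refine ⟨hineq, ?_, ?_⟩
    · -- equality → complete bipartite structure
      intro heq
      by_cases hlam0 : lam = 0
      · have hall : ∀ i, evals G i = 0 := fun i =>
          abs_nonpos_iff.mp (hlam0 ▸ habs i)
        have hm0 : (m : ℝ) = 0 := by
          have hz : (0:ℝ) = 2 * m := by
            rw [← h2]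
            exact (Finset.sum_eq_zero fun i _ => by rw [hall i]; ring).symm
          linarith
        have hmnat : m = 0 := by exact_mod_cast hm0
        have hE : edgeCount G = 0 := by rw [← hm]; exact hmnat
        have hempty : G.edgeSet = ∅ := by
          rw [← Set.ncard_eq_zero (Set.toFinite _)]
          exact hE
        have hnoadj : ∀ u v, ¬ G.Adj u v := by
          intro u v hA
          have : s(u, v) ∈ G.edgeSet := G.mem_edgeSet.mpr hA
          rw [hempty] at this
          exact this
        exact ⟨∅, ∅, disjoint_bot_left, fun u v =>
          iff_of_false (hnoadj u v) (by rintro (⟨h, -⟩ | ⟨h, -⟩) <;> exact h)⟩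
      · have hlampos : 0 < lam := lt_of_le_of_ne hnn (Ne.symm hlam0)
        have hsum_eq : ∑ i, (evals G i)^2 * (evals G i + lam) = 2 * lam^3 := by
          rw [hkey]
          linear_combination (6:ℝ) * heq
        have hsplit := Finset.add_sum_erase Finset.univ
          (fun i => (evals G i)^2 * (evals G i + lam)) (Finset.mem_univ i₀)
        beta_reduce at hsplit
        rw [hsum_eq] at hsplit
        have hi₀val : (evals G i₀)^2 * (evals G i₀ + lam) = 2 * lam^3 := by rw [hi₀]; ring
        have hrest : ∑ i ∈ Finset.univ.erase i₀, (evals G i)^2 * (evals G i + lam) = 0 := by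
          rw [hi₀val] at hsplit
          linarith
        have hzero : ∀ i ∈ Finset.univ.erase i₀, (evals G i)^2 * (evals G i + lam) = 0 :=
          (Finset.sum_eq_zero_iff_of_nonneg (fun i _ => hterm i)).1 hrest
        have hdichot : ∀ i, i ≠ i₀ → evals G i = 0 ∨ evals G i = -lam := by
          intro i hne
          have h := hzero i (Finset.mem_erase.mpr ⟨hne, Finset.mem_univ i⟩)
          rcases mul_eq_zero.1 h with h' | h'
          · exact Or.inl (pow_eq_zero_iff (by norm_num) |>.mp h')
          · exact Or.inr (by linarith)
        have hsplit0 := Finset.add_sum_erase Finset.univ (evals G) (Finset.mem_univ i₀)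
        rw [h0, hi₀] at hsplit0
        have hsum_erase : ∑ i ∈ Finset.univ.erase i₀, evals G i = -lam := by linarith
        obtain ⟨i₁, hi₁mem, hi₁ne⟩ : ∃ i₁ ∈ Finset.univ.erase i₀, evals G i₁ ≠ 0 := by
          apply Finset.exists_ne_zero_of_sum_ne_zero
          rw [hsum_erase]
          exact neg_ne_zero.mpr hlam0
        have hμ1 : evals G i₁ = -lam :=
          (hdichot i₁ (Finset.ne_of_mem_erase hi₁mem)).resolve_left hi₁ne
        have hne10 : i₁ ≠ i₀ := Finset.ne_of_mem_erase hi₁mem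
        have hzero2 : ∀ i, i ≠ i₀ → i ≠ i₁ → evals G i = 0 := by
          have hsplit1 := Finset.add_sum_erase (Finset.univ.erase i₀) (evals G) hi₁mem
          rw [hsum_erase, hμ1] at hsplit1
          have hrest2 : ∑ i ∈ (Finset.univ.erase i₀).erase i₁, evals G i = 0 := by linarith
          have hnonpos : ∀ i ∈ (Finset.univ.erase i₀).erase i₁, evals G i ≤ 0 := by
            intro i hi
            have hne0 : i ≠ i₀ := Finset.ne_of_mem_erase (Finset.mem_of_mem_erase hi)
            rcases hdichot i hne0 with h | h
            · exact le_of_eq h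
            · rw [h]; linarith
          have hallzero := (Finset.sum_eq_zero_iff_of_nonpos hnonpos).1 hrest2
          intro i h₀ h₁
          exact hallzero i (Finset.mem_erase.mpr ⟨h₁, Finset.mem_erase.mpr ⟨h₀,
            Finset.mem_univ i⟩⟩)
        set X : Fin n → ℝ := fun j => evU G j i₀ with hX
        set Y : Fin n → ℝ := fun j => evU G j i₁ with hY
        have hentry : ∀ j l, adjMat G j l = lam * (X j * X l) - lam * (Y j * Y l) := by
          intro j l
          rw [adjMat_entry G j l]
          have hsub : ({i₀, i₁} : Finset (Fin n)) ⊆ Finset.univ := Finset.subset_univ _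
          rw [← Finset.sum_subset hsub (fun i _ hni => ?_)]
          · rw [Finset.sum_pair (Ne.symm hne10), hi₀, hμ1]
            ring
          · simp only [Finset.mem_insert, Finset.mem_singleton, not_or] at hni
            rw [hzero2 i hni.1 hni.2]
            ring
        have hyx : ∀ j, Y j = X j ∨ Y j = - X j := by
          intro j
          have hdg : adjMat G j j = 0 := by
            simp only [adjMat, Matrix.of_apply, if_neg (G.irrefl (v := j))]
          rw [hentry j j] at hdg
          have hsq : X j * X j = Y j * Y j := by
            have h' : lam * (X j * X j) = lam * (Y j * Y j) := by linarith
            exact mul_left_cancel₀ hlam0 h'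
          have hfac : (Y j - X j) * (Y j + X j) = 0 := by linear_combination -hsq
          rcases mul_eq_zero.1 hfac with h | h
          · exact Or.inl (by linarith)
          · exact Or.inr (by linarith)
        refine ⟨{j | X j ≠ 0 ∧ Y j = - X j}, {j | X j ≠ 0 ∧ Y j = X j}, ?_, ?_⟩
        · rw [Set.disjoint_left]
          rintro j ⟨hxj, hyj⟩ ⟨-, hyj'⟩
          rw [hyj'] at hyj
          exact hxj (by linarith)
        · intro u v
          constructor
          · intro hadj2
            have hne : adjMat G u v ≠ 0 := by
              rw [adjMat_apply_of_adj hadj2]; norm_num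
            rw [hentry u v] at hne
            have hXu : X u ≠ 0 := by
              intro hz
              rcases hyx u with hy | hy <;> (apply hne; rw [hy, hz]; ring)
            have hXv : X v ≠ 0 := by
              intro hz
              rcases hyx v with hy | hy <;> (apply hne; rw [hy, hz]; ring)
            rcases hyx u with hyu | hyu <;> rcases hyx v with hyv | hyv
            · exact absurd (by rw [hyu, hyv]; ring) hne
            · exact Or.inr ⟨⟨hXu, hyu⟩, ⟨hXv, hyv⟩⟩
            · exact Or.inl ⟨⟨hXu, hyu⟩, ⟨hXv, hyv⟩⟩
            · exact absurd (by rw [hyu, hyv]; ring) hne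
          · rintro (⟨⟨hXu, hyu⟩, hXv, hyv⟩ | ⟨⟨hXu, hyu⟩, hXv, hyv⟩) <;>
              apply adj_of_adjMat_ne_zero <;> rw [hentry u v]
            · have hrw : lam * (X u * X v) - lam * (Y u * Y v)
                  = 2 * lam * (X u * X v) := by rw [hyu, hyv]; ring
              rw [hrw]
              exact mul_ne_zero (mul_ne_zero (by norm_num) hlam0) (mul_ne_zero hXu hXv)
            · have hrw : lam * (X u * X v) - lam * (Y u * Y v)
                  = 2 * lam * (X u * X v) := by rw [hyu, hyv]; ring
              rw [hrw]
              exact mul_ne_zero (mul_ne_zero (by norm_num) hlam0) (mul_ne_zero hXu hXv)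
    · -- complete bipartite structure → equality
      rintro ⟨A, B, hd, hadj⟩
      have ht0 : t = 0 := by rw [ht]; exact triangleCount_bip G A B hd hadj
      by_cases hedge : ∀ u v, ¬ G.Adj u v
      · have hm0 : m = 0 := by rw [hm]; exact edgeCount_eq_zero_of_bot G hedge
        have hl0 : lam = 0 := by rw [hlam]; exact specRad_bot G hedge
        rw [ht0, hm0, hl0]
        norm_num
      · push_neg at hedge
        obtain ⟨u₀, v₀, huv⟩ := hedge
        have hcross := (hadj u₀ v₀).1 huv
        have hAne : A.Nonempty := by
          rcases hcross with ⟨h, -⟩ | ⟨-, h⟩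
          exacts [⟨u₀, h⟩, ⟨v₀, h⟩]
        have hBne : B.Nonempty := by
          rcases hcross with ⟨-, h⟩ | ⟨h, -⟩
          exacts [⟨v₀, h⟩, ⟨u₀, h⟩]
        have hmab : m = A.ncard * B.ncard := by rw [hm]; exact edgeCount_bip G A B hd hadj
        obtain ⟨x, hx0, hxe⟩ := bip_eigenvec G A B hd hadj hAne hBne
        have hsqrt_mem : Real.sqrt ((A.ncard : ℝ) * B.ncard) ∈ spectrum ℝ (adjMat G) :=
          mem_spectrum_of_eigenvector hx0 hxe
        have hbdd : BddAbove (spectrum ℝ (adjMat G)) := by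
          rw [(adjMat_isHermitian G).spectrum_real_eq_range_eigenvalues]
          exact (Set.finite_range _).bddAbove
        have hge : Real.sqrt ((A.ncard : ℝ) * B.ncard) ≤ lam := le_csSup hbdd hsqrt_mem
        have habpos : 0 < (A.ncard : ℝ) * B.ncard := by
          have h1 : 0 < A.ncard := (Set.ncard_pos (Set.toFinite _)).mpr hAne
          have h2' : 0 < B.ncard := (Set.ncard_pos (Set.toFinite _)).mpr hBne
          positivity
        have hmcast : (m : ℝ) = (A.ncard : ℝ) * B.ncard := by rw [hmab]; push_cast; ring
        have hlampos : 0 < lam := lt_of_lt_of_le (Real.sqrt_pos.mpr habpos) hge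
        have hub : (m : ℝ) ≤ lam ^ 2 := by
          rw [hmcast]
          nlinarith [hge, Real.sq_sqrt habpos.le, Real.sqrt_nonneg ((A.ncard : ℝ) * B.ncard)]
        have hlb : lam ^ 2 ≤ (m : ℝ) := by
          rw [ht0] at hmain
          push_cast at hmain
          nlinarith [hmain, hlampos]
        have hsq : lam ^ 2 = (m : ℝ) := le_antisymm hlb hub
        rw [ht0, hsq]
        simp
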